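/- For all n and all subsets T of [n], the number of inversion sequences of length n whose set of occurrence positions of the consecutive pattern 1000 is exactly T equals the number of inversion sequences of length n whose set of occurrence positions of the consecutive pattern 1110 is exactly T (super strong Wilf equivalence of 1000 and 1110). -/
import Mathlib

/-- Inversion sequences of length `n` (0-indexed: entry `i` lies in `Fin (i+1)`). -/
abbrev InvSeq (n : ℕ) := ∀ i : Fin n, Fin (i.val + 1)

/-- The entry of an inversion sequence at position `i`, as a natural number. -/
def ev {n : ℕ} (e : InvSeq n) (i : ℕ) : ℕ := if h : i < n then (e ⟨i, h⟩ : ℕ) else 0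

/-- Positions of occurrences of the consecutive pattern 1000
(`e i > e (i+1) = e (i+2) = e (i+3)`). -/
def Em1000 {n : ℕ} (e : InvSeq n) : Set ℕ :=
  {i | i + 3 < n ∧ ev e (i+1) < ev e i ∧ ev e (i+1) = ev e (i+2) ∧ ev e (i+2) = ev e (i+3)}

/-- Positions of occurrences of the consecutive pattern 1110
(`e i = e (i+1) = e (i+2) > e (i+3)`). -/
def Em1110 {n : ℕ} (e : InvSeq n) : Set ℕ :=
  {i | i + 3 < n ∧ ev e i = ev e (i+1) ∧ ev e (i+1) = ev e (i+2) ∧ ev e (i+3) < ev e (i+2)}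

namespace SSW


def unrle : List (ℕ × ℕ) → List ℕ
  | [] => []
  | (v, a) :: R => List.replicate a v ++ unrle R

def rle : List ℕ → List (ℕ × ℕ)
  | [] => []
  | x :: xs =>
    match rle xs with
    | [] => [(x, 1)]
    | (v, a) :: R => if v = x then (x, a + 1) :: R else (x, 1) :: (v, a) :: R

def go : ℕ → ℕ → List (ℕ × ℕ) → List (ℕ × ℕ)
  | pend, pv, [] => [(pv, pend)]
  | pend, pv, (w, b) :: R =>
    if w < pv then
      if b ≤ 2 then (pv, b) :: go pend w R
      else (pv, pend + 2) :: go (b - 2) w R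
    else (pv, pend) :: go b w R

def phiL (l : List ℕ) : List ℕ :=
  match rle l with
  | [] => []
  | (v, a) :: R => unrle (go a v R)

def wfR : ℕ → List (ℕ × ℕ) → Prop
  | _, [] => True
  | pv, (w, b) :: R => 1 ≤ b ∧ w ≠ pv ∧ wfR w R

def wfH : List (ℕ × ℕ) → Prop
  | [] => True
  | (v, a) :: R => 1 ≤ a ∧ wfR v R

def evL (l : List ℕ) (i : ℕ) : ℕ := l.getD i 0

def occ1000 (l : List ℕ) : Set ℕ :=
  {i | i + 3 < l.length ∧ evL l (i+1) < evL l i ∧ evL l (i+1) = evL l (i+2) ∧ evL l (i+2) = evL l (i+3)}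

def occ1110 (l : List ℕ) : Set ℕ :=
  {i | i + 3 < l.length ∧ evL l i = evL l (i+1) ∧ evL l (i+1) = evL l (i+2) ∧ evL l (i+3) < evL l (i+2)}

def runValid : ℕ → List (ℕ × ℕ) → Prop
  | _, [] => True
  | t, (v, a) :: R => v ≤ t ∧ runValid (t + a) R

lemma evL_rep_append (a v : ℕ) (l : List ℕ) (i : ℕ) :
    evL (List.replicate a v ++ l) i = if i < a then v else evL l (i - a) := by
  unfold evL
  rcases lt_or_ge i a with h | h
  · rw [List.getD_append _ _ _ _ (by simpa using h)]
    simp [List.getD, h, List.getElem?_replicate]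
  · rw [List.getD_append_right _ _ _ _ (by simpa using h), if_neg (by omega)]
    simp

lemma unrle_length (R : List (ℕ × ℕ)) : (unrle R).length = (R.map Prod.snd).sum := by
  induction R with
  | nil => simp [unrle]
  | cons p R ih => obtain ⟨v, a⟩ := p; simp [unrle, ih]

lemma unrle_cons (v a : ℕ) (R : List (ℕ × ℕ)) :
    unrle ((v,a) :: R) = List.replicate a v ++ unrle R := rfl

lemma evL_unrle_zero (x c : ℕ) (R : List (ℕ × ℕ)) (hc : 1 ≤ c) :
    evL (unrle ((x,c)::R)) 0 = x := by
  rw [unrle_cons, evL_rep_append, if_pos (by omega)]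

lemma len_unrle_cons (v a : ℕ) (R : List (ℕ × ℕ)) :
    a ≤ (unrle ((v,a) :: R)).length := by
  rw [unrle_cons]; simp

lemma run3_iff (w b : ℕ) (R : List (ℕ × ℕ)) (hb : 1 ≤ b) (hR : wfR w R) :
    (3 ≤ (unrle ((w,b)::R)).length ∧ evL (unrle ((w,b)::R)) 1 = w ∧ evL (unrle ((w,b)::R)) 2 = w)
      ↔ 3 ≤ b := by
  constructor
  · rintro ⟨h1, h2, h3⟩
    by_contra hlt
    push_neg at hlt
    rcases R with _ | ⟨⟨x,c⟩, R'⟩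
    · rw [unrle_cons] at h1; simp [unrle] at h1; omega
    · obtain ⟨hc, hx, _⟩ := hR
      have h0 : evL (unrle ((x,c)::R')) 0 = x := evL_unrle_zero x c R' hc
      rw [unrle_cons, evL_rep_append] at h2 h3
      interval_cases b
      · rw [if_neg (by omega)] at h2; simp at h2; rw [h0] at h2; exact hx h2
      · rw [if_neg (by omega)] at h3; simp at h3; rw [h0] at h3; exact hx h3
  · intro h3
    have hl : b ≤ (unrle ((w,b)::R)).length := len_unrle_cons w b R
    refine ⟨by omega, ?_, ?_⟩ <;>
      rw [unrle_cons, evL_rep_append, if_pos (by omega)]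

lemma occ1000_cons (v a w b : ℕ) (R : List (ℕ × ℕ)) (ha : 1 ≤ a) (hb : 1 ≤ b)
    (hw : w ≠ v) (hR : wfR w R) :
    occ1000 (List.replicate a v ++ unrle ((w,b)::R)) =
      (if w < v ∧ 3 ≤ b then {a - 1} else (∅ : Set ℕ)) ∪ (· + a) '' occ1000 (unrle ((w,b)::R)) := by
  set t := unrle ((w,b)::R) with ht
  have htb : b ≤ t.length := len_unrle_cons w b R
  have h0 : evL t 0 = w := evL_unrle_zero w b R hb
  ext i
  simp only [occ1000, Set.mem_setOf_eq, Set.mem_union, Set.mem_image, List.length_append,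
    List.length_replicate, evL_rep_append]
  constructor
  · rintro ⟨hlen, h1, h2, h3⟩
    rcases Nat.lt_or_ge (i+1) a with hia | hia
    · exfalso
      have E0 : (if i < a then v else evL t (i - a)) = v := if_pos (by omega)
      have E1 : (if i + 1 < a then v else evL t (i + 1 - a)) = v := if_pos (by omega)
      rw [E0, E1] at h1; omega
    rcases Nat.eq_or_lt_of_le hia with hia2 | hia2
    · -- a = i + 1
      left
      have E0 : (if i < a then v else evL t (i - a)) = v := if_pos (by omega)
      have E1 : (if i + 1 < a then v else evL t (i + 1 - a)) = w := by
        rw [if_neg (by omega), show i + 1 - a = 0 by omega, h0]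
      have E2 : (if i + 2 < a then v else evL t (i + 2 - a)) = evL t 1 := by
        rw [if_neg (by omega), show i + 2 - a = 1 by omega]
      have E3 : (if i + 3 < a then v else evL t (i + 3 - a)) = evL t 2 := by
        rw [if_neg (by omega), show i + 3 - a = 2 by omega]
      rw [E0, E1] at h1
      rw [E1, E2] at h2
      rw [E2, E3] at h3
      have h3b : 3 ≤ b := by
        rw [← run3_iff w b R hb hR]
        exact ⟨by rw [← ht]; omega, h2.symm, by rw [← h3, ← h2]⟩
      simp only [if_pos (And.intro h1 h3b), Set.mem_singleton_iff]
      omega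
    · -- a ≤ i
      right
      have E0 : (if i < a then v else evL t (i - a)) = evL t (i - a) := if_neg (by omega)
      have E1 : (if i + 1 < a then v else evL t (i + 1 - a)) = evL t (i - a + 1) := by
        rw [if_neg (by omega), show i + 1 - a = i - a + 1 by omega]
      have E2 : (if i + 2 < a then v else evL t (i + 2 - a)) = evL t (i - a + 2) := by
        rw [if_neg (by omega), show i + 2 - a = i - a + 2 by omega]
      have E3 : (if i + 3 < a then v else evL t (i + 3 - a)) = evL t (i - a + 3) := by
        rw [if_neg (by omega), show i + 3 - a = i - a + 3 by omega]
      rw [E0, E1] at h1; rw [E1, E2] at h2; rw [E2, E3] at h3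
      exact ⟨i - a, ⟨by omega, h1, h2, h3⟩, by omega⟩
  · rintro (hbd | ⟨j, ⟨hjlen, hj1, hj2, hj3⟩, hj⟩)
    · by_cases hc : w < v ∧ 3 ≤ b
      · rw [if_pos hc] at hbd
        simp only [Set.mem_singleton_iff] at hbd
        subst hbd
        obtain ⟨hwv, h3b⟩ := hc
        have hrun := (run3_iff w b R hb hR).2 h3b
        have E0 : (if a - 1 < a then v else evL t (a - 1 - a)) = v := if_pos (by omega)
        have E1 : (if a - 1 + 1 < a then v else evL t (a - 1 + 1 - a)) = w := by
          rw [if_neg (by omega), show a - 1 + 1 - a = 0 by omega, h0]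
        have E2 : (if a - 1 + 2 < a then v else evL t (a - 1 + 2 - a)) = w := by
          rw [if_neg (by omega), show a - 1 + 2 - a = 1 by omega]; exact hrun.2.1
        have E3 : (if a - 1 + 3 < a then v else evL t (a - 1 + 3 - a)) = w := by
          rw [if_neg (by omega), show a - 1 + 3 - a = 2 by omega]; exact hrun.2.2
        rw [E0, E1, E2, E3]
        have : 3 ≤ t.length := by omega
        exact ⟨by omega, hwv, rfl, rfl⟩
      · rw [if_neg hc] at hbd; exact absurd hbd (Set.notMem_empty _)
    · subst hj
      have E0 : (if j + a < a then v else evL t (j + a - a)) = evL t j := by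
        rw [if_neg (by omega), show j + a - a = j by omega]
      have E1 : (if j + a + 1 < a then v else evL t (j + a + 1 - a)) = evL t (j + 1) := by
        rw [if_neg (by omega), show j + a + 1 - a = j + 1 by omega]
      have E2 : (if j + a + 2 < a then v else evL t (j + a + 2 - a)) = evL t (j + 2) := by
        rw [if_neg (by omega), show j + a + 2 - a = j + 2 by omega]
      have E3 : (if j + a + 3 < a then v else evL t (j + a + 3 - a)) = evL t (j + 3) := by
        rw [if_neg (by omega), show j + a + 3 - a = j + 3 by omega]
      rw [E0, E1, E2, E3]
      exact ⟨by omega, hj1, hj2, hj3⟩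

lemma occ1110_cons (v a w b : ℕ) (R : List (ℕ × ℕ)) (ha : 1 ≤ a) (hb : 1 ≤ b)
    (hw : w ≠ v) :
    occ1110 (List.replicate a v ++ unrle ((w,b)::R)) =
      (if w < v ∧ 3 ≤ a then {a - 3} else (∅ : Set ℕ)) ∪ (· + a) '' occ1110 (unrle ((w,b)::R)) := by
  set t := unrle ((w,b)::R) with ht
  have htb : b ≤ t.length := len_unrle_cons w b R
  have h0 : evL t 0 = w := evL_unrle_zero w b R hb
  ext i
  simp only [occ1110, Set.mem_setOf_eq, Set.mem_union, Set.mem_image, List.length_append,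
    List.length_replicate, evL_rep_append]
  constructor
  · rintro ⟨hlen, h1, h2, h3⟩
    rcases Nat.lt_or_ge (i+3) a with hia | hia
    · exfalso
      have E2 : (if i + 2 < a then v else evL t (i + 2 - a)) = v := if_pos (by omega)
      have E3 : (if i + 3 < a then v else evL t (i + 3 - a)) = v := if_pos (by omega)
      rw [E2, E3] at h3; omega
    rcases Nat.lt_or_ge i a with hib | hib
    · -- i < a ≤ i + 3 : the only candidate is i = a - 3
      have E0 : (if i < a then v else evL t (i - a)) = v := if_pos (by omega)
      -- case on whether i + 1 < a
      rcases Nat.lt_or_ge (i+1) a with h1a | h1a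
      · rcases Nat.lt_or_ge (i+2) a with h2a | h2a
        · -- i = a - 3 exactly
          left
          have E3 : (if i + 3 < a then v else evL t (i + 3 - a)) = w := by
            rw [if_neg (by omega), show i + 3 - a = 0 by omega, h0]
          have E2 : (if i + 2 < a then v else evL t (i + 2 - a)) = v := if_pos (by omega)
          rw [E3, E2] at h3
          have : w < v ∧ 3 ≤ a := ⟨h3, by omega⟩
          simp only [if_pos this, Set.mem_singleton_iff]
          omega
        · -- i + 2 = a : h2 gives v = w, contradiction
          exfalso
          have E1 : (if i + 1 < a then v else evL t (i + 1 - a)) = v := if_pos (by omega)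
          have E2 : (if i + 2 < a then v else evL t (i + 2 - a)) = w := by
            rw [if_neg (by omega), show i + 2 - a = 0 by omega, h0]
          rw [E1, E2] at h2; exact hw h2.symm
      · -- i + 1 = a : h1 gives v = w, contradiction
        exfalso
        have E1 : (if i + 1 < a then v else evL t (i + 1 - a)) = w := by
          rw [if_neg (by omega), show i + 1 - a = 0 by omega, h0]
        rw [E0, E1] at h1; exact hw h1.symm
    · -- a ≤ i
      right
      have E0 : (if i < a then v else evL t (i - a)) = evL t (i - a) := if_neg (by omega)
      have E1 : (if i + 1 < a then v else evL t (i + 1 - a)) = evL t (i - a + 1) := by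
        rw [if_neg (by omega), show i + 1 - a = i - a + 1 by omega]
      have E2 : (if i + 2 < a then v else evL t (i + 2 - a)) = evL t (i - a + 2) := by
        rw [if_neg (by omega), show i + 2 - a = i - a + 2 by omega]
      have E3 : (if i + 3 < a then v else evL t (i + 3 - a)) = evL t (i - a + 3) := by
        rw [if_neg (by omega), show i + 3 - a = i - a + 3 by omega]
      rw [E0, E1] at h1; rw [E1, E2] at h2; rw [E3, E2] at h3
      exact ⟨i - a, ⟨by omega, h1, h2, h3⟩, by omega⟩
  · rintro (hbd | ⟨j, ⟨hjlen, hj1, hj2, hj3⟩, hj⟩)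
    · by_cases hc : w < v ∧ 3 ≤ a
      · rw [if_pos hc] at hbd
        simp only [Set.mem_singleton_iff] at hbd
        subst hbd
        obtain ⟨hwv, h3a⟩ := hc
        have E0 : (if a - 3 < a then v else evL t (a - 3 - a)) = v := if_pos (by omega)
        have E1 : (if a - 3 + 1 < a then v else evL t (a - 3 + 1 - a)) = v := if_pos (by omega)
        have E2 : (if a - 3 + 2 < a then v else evL t (a - 3 + 2 - a)) = v := if_pos (by omega)
        have E3 : (if a - 3 + 3 < a then v else evL t (a - 3 + 3 - a)) = w := by
          rw [if_neg (by omega), show a - 3 + 3 - a = 0 by omega, h0]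
        rw [E0, E1, E2, E3]
        exact ⟨by omega, rfl, rfl, hwv⟩
      · rw [if_neg hc] at hbd; exact absurd hbd (Set.notMem_empty _)
    · subst hj
      have E0 : (if j + a < a then v else evL t (j + a - a)) = evL t j := by
        rw [if_neg (by omega), show j + a - a = j by omega]
      have E1 : (if j + a + 1 < a then v else evL t (j + a + 1 - a)) = evL t (j + 1) := by
        rw [if_neg (by omega), show j + a + 1 - a = j + 1 by omega]
      have E2 : (if j + a + 2 < a then v else evL t (j + a + 2 - a)) = evL t (j + 2) := by
        rw [if_neg (by omega), show j + a + 2 - a = j + 2 by omega]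
      have E3 : (if j + a + 3 < a then v else evL t (j + a + 3 - a)) = evL t (j + 3) := by
        rw [if_neg (by omega), show j + a + 3 - a = j + 3 by omega]
      rw [E0, E1, E2, E3]
      exact ⟨by omega, hj1, hj2, hj3⟩
lemma img_comp (k m : ℕ) (S : Set ℕ) : (· + m) '' ((· + k) '' S) = (· + (k + m)) '' S := by
  rw [Set.image_image]
  simp only [add_assoc]

lemma add_right_inj' (k : ℕ) : Function.Injective (· + k : ℕ → ℕ) := by
  intro x y h
  simpa using h

lemma img_cancel {k : ℕ} {S T : Set ℕ} (h : (· + k) '' S = (· + k) '' T) : S = T :=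
  Set.image_injective.mpr (add_right_inj' k) h

lemma occ1000_rep (a v : ℕ) : occ1000 (List.replicate a v) = ∅ := by
  ext i
  simp only [occ1000, Set.mem_setOf_eq, List.length_replicate, Set.mem_empty_iff_false,
    iff_false, not_and]
  intro hi
  rw [show List.replicate a v = List.replicate a v ++ ([] : List ℕ) by simp,
    evL_rep_append, evL_rep_append, if_pos (by omega), if_pos (by omega)]
  omega

lemma occ1110_rep (a v : ℕ) : occ1110 (List.replicate a v) = ∅ := by
  ext i
  simp only [occ1110, Set.mem_setOf_eq, List.length_replicate, Set.mem_empty_iff_false,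
    iff_false, not_and]
  intro hi h1 h2
  rw [show List.replicate a v = List.replicate a v ++ ([] : List ℕ) by simp,
    evL_rep_append, evL_rep_append, if_pos (by omega), if_pos (by omega)]
  omega

lemma go_head (pend pv : ℕ) (R : List (ℕ × ℕ)) (hp : 1 ≤ pend) (hR : wfR pv R) :
    ∃ c G, go pend pv R = (pv, c) :: G ∧ 1 ≤ c := by
  match R with
  | [] => exact ⟨pend, [], rfl, hp⟩
  | (w, b) :: R' =>
    obtain ⟨hb, hwpv, hR'⟩ := hR
    by_cases h1 : w < pv
    · by_cases h2 : b ≤ 2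
      · exact ⟨b, go pend w R', by simp [go, h1, h2], hb⟩
      · exact ⟨pend + 2, go (b-2) w R', by simp [go, h1, h2], by omega⟩
    · exact ⟨pend, go b w R', by simp [go, h1], hp⟩

lemma img_const_congr {c1 c2 : ℕ} (S : Set ℕ) (h : c1 = c2) :
    (· + c1) '' S = (· + c2) '' S := by rw [h]

theorem main : ∀ (R : List (ℕ × ℕ)) (pv pend a : ℕ), 1 ≤ pend → 1 ≤ a → wfR pv R →
    (· + pend) '' occ1000 (unrle ((pv, a) :: R)) = (· + a) '' occ1110 (unrle (go pend pv R)) := by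
  intro R
  induction R with
  | nil =>
    intro pv pend a hp ha _
    have h1 : unrle ((pv, a) :: []) = List.replicate a pv := by simp [unrle]
    have h2 : go pend pv [] = [(pv, pend)] := rfl
    have h3 : unrle [(pv, pend)] = List.replicate pend pv := by simp [unrle]
    rw [h1, h2, h3, occ1000_rep, occ1110_rep]
    simp
  | cons p R' ih =>
    obtain ⟨w, b⟩ := p
    intro pv pend a hp ha hR
    obtain ⟨hb, hwpv, hR'⟩ := hR
    rw [unrle_cons pv a, occ1000_cons pv a w b R' ha hb hwpv hR']
    by_cases h1 : w < pv
    · by_cases h2 : b ≤ 2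
      · -- same block: go = (pv,b) :: go pend w R'
        have hg : go pend pv ((w,b)::R') = (pv, b) :: go pend w R' := by
          simp [go, h1, h2]
        obtain ⟨c, G, hG, hc⟩ := go_head pend w R' hp hR'
        rw [hg, hG, unrle_cons pv b, occ1110_cons pv b w c G hb hc hwpv, ← hG]
        have hcond : ¬ (w < pv ∧ 3 ≤ b) := by omega
        rw [if_neg hcond, if_neg hcond]
        have hIH := ih w pend b hp hb hR'
        simp only [Set.empty_union, Set.image_union, Set.image_singleton, img_comp]
        rw [show a + pend = pend + a from by omega, ← img_comp, hIH, img_comp]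
      · -- big descent
        have hb3 : 3 ≤ b := by omega
        have hg : go pend pv ((w,b)::R') = (pv, pend + 2) :: go (b-2) w R' := by
          simp [go, h1, h2]
        obtain ⟨c, G, hG, hc⟩ := go_head (b-2) w R' (by omega) hR'
        rw [hg, hG, unrle_cons pv (pend+2), occ1110_cons pv (pend+2) w c G (by omega) hc hwpv,
          ← hG]
        rw [if_pos ⟨h1, hb3⟩, if_pos ⟨h1, by omega⟩]
        have hIH := ih w (b-2) b (by omega) hb hR'
        have hYX : occ1000 (unrle ((w, b) :: R')) =
            (· + 2) '' occ1110 (unrle (go (b-2) w R')) := by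
          apply img_cancel (k := b - 2)
          rw [hIH, img_comp, show 2 + (b - 2) = b from by omega]
        rw [hYX]
        simp only [Set.image_union, Set.image_singleton, img_comp]
        congr 1
        · rw [Set.singleton_eq_singleton_iff]; omega
        · exact img_const_congr _ (by omega)
    · -- ascent
      have hg : go pend pv ((w,b)::R') = (pv, pend) :: go b w R' := by
        simp [go, h1]
      obtain ⟨c, G, hG, hc⟩ := go_head b w R' hb hR'
      rw [hg, hG, unrle_cons pv pend, occ1110_cons pv pend w c G hp hc hwpv, ← hG]
      have hcond : ¬ (w < pv ∧ 3 ≤ b) := by tauto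
      have hcond2 : ¬ (w < pv ∧ 3 ≤ pend) := by tauto
      rw [if_neg hcond, if_neg hcond2]
      have hIH := ih w b b hb hb hR'
      have hYX : occ1000 (unrle ((w, b) :: R')) = occ1110 (unrle (go b w R')) :=
        img_cancel hIH
      simp only [Set.empty_union, img_comp]
      rw [hYX]
      exact img_const_congr _ (by omega)

lemma rle_head_val (x : ℕ) (xs : List ℕ) :
    ∃ a R, rle (x :: xs) = (x, a) :: R ∧ 1 ≤ a := by
  rw [rle]
  rcases h : rle xs with _ | ⟨⟨v, a⟩, R⟩
  · exact ⟨1, [], rfl, le_refl 1⟩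
  · by_cases hv : v = x
    · simp only [hv, if_pos rfl]
      exact ⟨a + 1, R, rfl, by omega⟩
    · simp only [if_neg hv]
      exact ⟨1, (v, a) :: R, rfl, le_refl 1⟩

lemma rle_wf (l : List ℕ) : wfH (rle l) := by
  induction l with
  | nil => simp [rle, wfH]
  | cons x xs ih =>
    rw [rle]
    rcases h : rle xs with _ | ⟨⟨v, a⟩, R⟩
    · simp [wfH, wfR]
    · rw [h] at ih
      by_cases hv : v = x
      · simp only [hv, if_pos rfl]
        unfold wfH at ih ⊢
        subst hv
        exact ⟨by omega, ih.2⟩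
      · simp only [if_neg hv]
        unfold wfH at ih ⊢
        exact ⟨le_refl 1, ih.1, hv, ih.2⟩

lemma unrle_rle (l : List ℕ) : unrle (rle l) = l := by
  induction l with
  | nil => simp [rle, unrle]
  | cons x xs ih =>
    rw [rle]
    rcases h : rle xs with _ | ⟨⟨v, a⟩, R⟩
    · rw [h] at ih; simp [unrle] at ih ⊢; exact ih
    · rw [h] at ih
      by_cases hv : v = x
      · subst hv
        show unrle (if v = v then (v, a + 1) :: R else (v, 1) :: (v, a) :: R) = v :: xs
        rw [if_pos rfl, unrle_cons, List.replicate_succ, List.cons_append]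
        rw [unrle_cons] at ih
        rw [ih]
      · simp only [if_neg hv]
        rw [unrle_cons, List.replicate_one, List.singleton_append, ih]

lemma rle_rep_append (v : ℕ) (l : List ℕ)
    (h : ∀ w b R', rle l = (w, b) :: R' → w ≠ v) :
    ∀ a, rle (List.replicate a v ++ l) = if a = 0 then rle l else (v, a) :: rle l := by
  intro a
  induction a with
  | zero => simp
  | succ a iha =>
    by_cases ha : a = 0
    · subst ha
      rw [List.replicate_one, List.singleton_append, rle]
      rcases hl : rle l with _ | ⟨⟨w, b⟩, R'⟩
      · simp [hl]
      · have hwv := h w b R' hl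
        simp [hl, hwv]
    · rw [List.replicate_succ, List.cons_append, rle, iha, if_neg ha, if_neg (by omega)]
      simp

lemma rle_unrle (R : List (ℕ × ℕ)) (hR : wfH R) : rle (unrle R) = R := by
  induction R with
  | nil => simp [unrle, rle]
  | cons p R ih =>
    obtain ⟨v, a⟩ := p
    obtain ⟨ha, hwf⟩ := hR
    have hR' : wfH R := by
      rcases R with _ | ⟨⟨w, b⟩, R'⟩
      · trivial
      · exact ⟨hwf.1, hwf.2.2⟩
    rw [unrle_cons, rle_rep_append v (unrle R) ?_ a, if_neg (by omega), ih hR']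
    intro w b R' hrle
    rw [ih hR'] at hrle
    rcases R with _ | ⟨⟨w', b'⟩, R''⟩
    · simp at hrle
    · have h2 : (w' = w ∧ b' = b) ∧ R'' = R' := by simpa using hrle
      rw [← h2.1.1]
      exact hwf.2.1

lemma go_wf : ∀ (R : List (ℕ × ℕ)) (pv pend : ℕ), 1 ≤ pend → wfR pv R → wfH (go pend pv R) := by
  intro R
  induction R with
  | nil => intro pv pend hp _; exact ⟨hp, trivial⟩
  | cons p R' ih =>
    obtain ⟨w, b⟩ := p
    intro pv pend hp hR
    obtain ⟨hb, hwpv, hR'⟩ := hR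
    by_cases h1 : w < pv
    · by_cases h2 : b ≤ 2
      · rw [show go pend pv ((w,b)::R') = (pv, b) :: go pend w R' from by simp [go, h1, h2]]
        obtain ⟨c, G, hG, hc⟩ := go_head pend w R' hp hR'
        have hwf := ih w pend hp hR'
        rw [hG] at hwf ⊢
        exact ⟨hb, hwf.1, hwpv, hwf.2⟩
      · rw [show go pend pv ((w,b)::R') = (pv, pend + 2) :: go (b-2) w R' from by
          simp [go, h1, h2]]
        obtain ⟨c, G, hG, hc⟩ := go_head (b-2) w R' (by omega) hR'
        have hwf := ih w (b-2) (by omega) hR'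
        rw [hG] at hwf ⊢
        exact ⟨by omega, hwf.1, hwpv, hwf.2⟩
    · rw [show go pend pv ((w,b)::R') = (pv, pend) :: go b w R' from by simp [go, h1]]
      obtain ⟨c, G, hG, hc⟩ := go_head b w R' hb hR'
      have hwf := ih w b hb hR'
      rw [hG] at hwf ⊢
      exact ⟨hp, hwf.1, hwpv, hwf.2⟩

lemma go_sum : ∀ (R : List (ℕ × ℕ)) (pv pend : ℕ),
    ((go pend pv R).map Prod.snd).sum = pend + ((R.map Prod.snd)).sum := by
  intro R
  induction R with
  | nil => intro pv pend; simp [go]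
  | cons p R' ih =>
    obtain ⟨w, b⟩ := p
    intro pv pend
    by_cases h1 : w < pv
    · by_cases h2 : b ≤ 2
      · rw [show go pend pv ((w,b)::R') = (pv, b) :: go pend w R' from by simp [go, h1, h2]]
        simp only [List.map_cons, List.sum_cons, ih]
        omega
      · rw [show go pend pv ((w,b)::R') = (pv, pend + 2) :: go (b-2) w R' from by
          simp [go, h1, h2]]
        simp only [List.map_cons, List.sum_cons, ih]
        omega
    · rw [show go pend pv ((w,b)::R') = (pv, pend) :: go b w R' from by simp [go, h1]]
      simp only [List.map_cons, List.sum_cons, ih]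

lemma go_inj : ∀ (R S : List (ℕ × ℕ)) (pv pend qend : ℕ), 1 ≤ pend → 1 ≤ qend →
    wfR pv R → wfR pv S → go pend pv R = go qend pv S → pend = qend ∧ R = S := by
  intro R
  induction R with
  | nil =>
    intro S pv pend qend hp hq _ hS h
    rcases S with _ | ⟨⟨x, c⟩, S'⟩
    · simp only [go] at h
      simp at h
      exact ⟨h, rfl⟩
    · exfalso
      obtain ⟨hc, hxpv, hS'⟩ := hS
      by_cases h1 : x < pv
      · by_cases h2 : c ≤ 2
        · rw [show go qend pv ((x,c)::S') = (pv, c) :: go qend x S' from by simp [go, h1, h2],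
            show go pend pv [] = [(pv, pend)] from rfl] at h
          obtain ⟨c2, G2, hG2, _⟩ := go_head qend x S' hq hS'
          rw [hG2] at h
          simp at h
        · rw [show go qend pv ((x,c)::S') = (pv, qend + 2) :: go (c-2) x S' from by
            simp [go, h1, h2], show go pend pv [] = [(pv, pend)] from rfl] at h
          obtain ⟨c2, G2, hG2, _⟩ := go_head (c-2) x S' (by omega) hS'
          rw [hG2] at h
          simp at h
      · rw [show go qend pv ((x,c)::S') = (pv, qend) :: go c x S' from by simp [go, h1],
          show go pend pv [] = [(pv, pend)] from rfl] at h
        obtain ⟨c2, G2, hG2, _⟩ := go_head c x S' hc hS'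
        rw [hG2] at h
        simp at h
  | cons p R' ih =>
    obtain ⟨w, b⟩ := p
    intro S pv pend qend hp hq hR hS h
    obtain ⟨hb, hwpv, hR'⟩ := hR
    rcases S with _ | ⟨⟨x, c⟩, S'⟩
    · exfalso
      by_cases h1 : w < pv
      · by_cases h2 : b ≤ 2
        · rw [show go pend pv ((w,b)::R') = (pv, b) :: go pend w R' from by simp [go, h1, h2],
            show go qend pv [] = [(pv, qend)] from rfl] at h
          obtain ⟨c2, G2, hG2, _⟩ := go_head pend w R' hp hR'
          rw [hG2] at h
          simp at h
        · rw [show go pend pv ((w,b)::R') = (pv, pend + 2) :: go (b-2) w R' from by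
            simp [go, h1, h2], show go qend pv [] = [(pv, qend)] from rfl] at h
          obtain ⟨c2, G2, hG2, _⟩ := go_head (b-2) w R' (by omega) hR'
          rw [hG2] at h
          simp at h
      · rw [show go pend pv ((w,b)::R') = (pv, pend) :: go b w R' from by simp [go, h1],
          show go qend pv [] = [(pv, qend)] from rfl] at h
        obtain ⟨c2, G2, hG2, _⟩ := go_head b w R' hb hR'
        rw [hG2] at h
        simp at h
    · obtain ⟨hc, hxpv, hS'⟩ := hS
      -- reduce both sides to explicit cons forms
      by_cases h1 : w < pv <;> by_cases h1' : x < pv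
      · -- both descents
        by_cases h2 : b ≤ 2 <;> by_cases h2' : c ≤ 2
        · rw [show go pend pv ((w,b)::R') = (pv, b) :: go pend w R' from by simp [go, h1, h2],
            show go qend pv ((x,c)::S') = (pv, c) :: go qend x S' from by simp [go, h1', h2']] at h
          obtain ⟨c1, G1, hG1, _⟩ := go_head pend w R' hp hR'
          obtain ⟨c2, G2, hG2, _⟩ := go_head qend x S' hq hS'
          have hbc : b = c ∧ go pend w R' = go qend x S' := by
            simp at h
            exact ⟨h.1, h.2⟩
          have hwx : w = x := by
            have h3 := hbc.2
            rw [hG1, hG2] at h3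
            simp at h3
            exact h3.1.1
          subst hwx
          obtain ⟨hpq, hRS⟩ := ih S' w pend qend hp hq hR' hS' hbc.2
          exact ⟨hpq, by rw [hbc.1, hRS]⟩
        · -- b ≤ 2, c ≥ 3 : contradiction
          exfalso
          rw [show go pend pv ((w,b)::R') = (pv, b) :: go pend w R' from by simp [go, h1, h2],
            show go qend pv ((x,c)::S') = (pv, qend + 2) :: go (c-2) x S' from by
              simp [go, h1', h2']] at h
          simp at h
          omega
        · exfalso
          rw [show go pend pv ((w,b)::R') = (pv, pend + 2) :: go (b-2) w R' from by
              simp [go, h1, h2],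
            show go qend pv ((x,c)::S') = (pv, c) :: go qend x S' from by simp [go, h1', h2']] at h
          simp at h
          omega
        · rw [show go pend pv ((w,b)::R') = (pv, pend + 2) :: go (b-2) w R' from by
              simp [go, h1, h2],
            show go qend pv ((x,c)::S') = (pv, qend + 2) :: go (c-2) x S' from by
              simp [go, h1', h2']] at h
          obtain ⟨c1, G1, hG1, _⟩ := go_head (b-2) w R' (by omega) hR'
          obtain ⟨c2, G2, hG2, _⟩ := go_head (c-2) x S' (by omega) hS'
          have hbc : pend = qend ∧ go (b-2) w R' = go (c-2) x S' := by
            simp at h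
            exact ⟨by omega, h.2⟩
          have hwx : w = x := by
            have h3 := hbc.2
            rw [hG1, hG2] at h3
            simp at h3
            exact h3.1.1
          subst hwx
          obtain ⟨hpq, hRS⟩ := ih S' w (b-2) (c-2) (by omega) (by omega) hR' hS' hbc.2
          exact ⟨hbc.1, by rw [show b = c from by omega, hRS]⟩
      · -- w < pv, ¬ x < pv : tails give w = x, contradiction
        exfalso
        have hxg : go qend pv ((x,c)::S') = (pv, qend) :: go c x S' := by simp [go, h1']
        obtain ⟨c2, G2, hG2, _⟩ := go_head c x S' hc hS'
        by_cases h2 : b ≤ 2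
        · rw [show go pend pv ((w,b)::R') = (pv, b) :: go pend w R' from by simp [go, h1, h2],
            hxg] at h
          obtain ⟨c1, G1, hG1, _⟩ := go_head pend w R' hp hR'
          rw [hG1, hG2] at h
          simp at h
          omega
        · rw [show go pend pv ((w,b)::R') = (pv, pend + 2) :: go (b-2) w R' from by
            simp [go, h1, h2], hxg] at h
          obtain ⟨c1, G1, hG1, _⟩ := go_head (b-2) w R' (by omega) hR'
          rw [hG1, hG2] at h
          simp at h
          omega
      · -- ¬ w < pv, x < pv
        exfalso
        have hwg : go pend pv ((w,b)::R') = (pv, pend) :: go b w R' := by simp [go, h1]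
        obtain ⟨c1, G1, hG1, _⟩ := go_head b w R' hb hR'
        by_cases h2' : c ≤ 2
        · rw [hwg, show go qend pv ((x,c)::S') = (pv, c) :: go qend x S' from by
            simp [go, h1', h2']] at h
          obtain ⟨c2, G2, hG2, _⟩ := go_head qend x S' hq hS'
          rw [hG1, hG2] at h
          simp at h
          omega
        · rw [hwg, show go qend pv ((x,c)::S') = (pv, qend + 2) :: go (c-2) x S' from by
            simp [go, h1', h2']] at h
          obtain ⟨c2, G2, hG2, _⟩ := go_head (c-2) x S' (by omega) hS'
          rw [hG1, hG2] at h
          simp at h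
          omega
      · -- both ascents
        rw [show go pend pv ((w,b)::R') = (pv, pend) :: go b w R' from by simp [go, h1],
          show go qend pv ((x,c)::S') = (pv, qend) :: go c x S' from by simp [go, h1']] at h
        obtain ⟨c1, G1, hG1, _⟩ := go_head b w R' hb hR'
        obtain ⟨c2, G2, hG2, _⟩ := go_head c x S' hc hS'
        have hbc : pend = qend ∧ go b w R' = go c x S' := by
          simp at h
          exact ⟨h.1, h.2⟩
        have hwx : w = x := by
          have h3 := hbc.2
          rw [hG1, hG2] at h3
          simp at h3
          exact h3.1.1
        subst hwx
        obtain ⟨hpq, hRS⟩ := ih S' w b c hb hc hR' hS' hbc.2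
        exact ⟨hbc.1, by rw [hpq, hRS]⟩

lemma go_valid : ∀ (R : List (ℕ × ℕ)) (pv pend a s t : ℕ), 1 ≤ pend → pv ≤ s →
    s + pend = t + a → wfR pv R → runValid (t + a) R →
    ∀ p, evL (unrle (go pend pv R)) p ≤ s + p := by
  intro R
  induction R with
  | nil =>
    intro pv pend a s t hp hpv hst _ hrv p
    show evL (unrle [(pv, pend)]) p ≤ s + p
    rw [show unrle [(pv, pend)] = List.replicate pend pv ++ [] from by simp [unrle],
      evL_rep_append]
    by_cases h : p < pend
    · rw [if_pos h]; omega
    · rw [if_neg h]; simp [evL]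
  | cons q R' ih =>
    obtain ⟨w, b⟩ := q
    intro pv pend a s t hp hpv hst hwfR hrv p
    obtain ⟨hw, hrv'⟩ := hrv
    obtain ⟨hb, hwpv, hR'⟩ := hwfR
    by_cases h1 : w < pv
    · by_cases h2 : b ≤ 2
      · rw [show go pend pv ((w,b)::R') = (pv, b) :: go pend w R' from by simp [go, h1, h2],
          unrle_cons, evL_rep_append]
        by_cases h : p < b
        · rw [if_pos h]; omega
        · rw [if_neg h]
          have := ih w pend b (s + b) (t + a) hp (by omega) (by omega) hR' hrv' (p - b)
          omega
      · rw [show go pend pv ((w,b)::R') = (pv, pend + 2) :: go (b-2) w R' from by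
          simp [go, h1, h2], unrle_cons, evL_rep_append]
        by_cases h : p < pend + 2
        · rw [if_pos h]; omega
        · rw [if_neg h]
          have := ih w (b-2) b (s + (pend + 2)) (t + a) (by omega) (by omega) (by omega)
            hR' hrv' (p - (pend + 2))
          omega
    · rw [show go pend pv ((w,b)::R') = (pv, pend) :: go b w R' from by simp [go, h1],
        unrle_cons, evL_rep_append]
      by_cases h : p < pend
      · rw [if_pos h]; omega
      · rw [if_neg h]
        have := ih w b b (s + pend) (t + a) hb (by omega) (by omega) hR' hrv' (p - pend)
        omega

lemma runValid_of_evL : ∀ (R : List (ℕ × ℕ)) (t : ℕ), wfH R →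
    (∀ i, i < (unrle R).length → evL (unrle R) i ≤ t + i) → runValid t R := by
  intro R
  induction R with
  | nil => intro t _ _; trivial
  | cons q R' ih =>
    obtain ⟨v, a⟩ := q
    intro t hwf hb
    obtain ⟨ha, hwfR⟩ := hwf
    have hlen : a ≤ (unrle ((v,a)::R')).length := len_unrle_cons v a R'
    refine ⟨?_, ?_⟩
    · have h0 := hb 0 (by omega)
      rw [evL_unrle_zero v a R' ha] at h0
      simpa using h0
    · apply ih (t + a)
      · rcases R' with _ | ⟨⟨w, b⟩, R''⟩
        · trivial
        · exact ⟨hwfR.1, hwfR.2.2⟩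
      · intro i hi
        have hlen2 : (unrle ((v,a)::R')).length = a + (unrle R').length := by
          rw [unrle_cons]; simp
        have := hb (a + i) (by omega)
        rw [unrle_cons, evL_rep_append, if_neg (by omega),
          show a + i - a = i from by omega] at this
        omega

lemma occ1000_nil : occ1000 [] = ∅ := by
  ext i; simp [occ1000]

lemma occ1110_nil : occ1110 [] = ∅ := by
  ext i; simp [occ1110]

lemma phiL_length (l : List ℕ) : (phiL l).length = l.length := by
  conv_rhs => rw [← unrle_rle l]
  rcases hl : rle l with _ | ⟨⟨v, a⟩, R⟩
  · simp [phiL, hl, unrle]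
  · rw [show phiL l = unrle (go a v R) from by rw [phiL, hl]]
    rw [unrle_length, unrle_length, go_sum]
    simp

lemma phiL_occ (l : List ℕ) : occ1000 l = occ1110 (phiL l) := by
  rcases hl : rle l with _ | ⟨⟨v, a⟩, R⟩
  · have : l = [] := by
      have := unrle_rle l
      rw [hl] at this
      simpa [unrle] using this.symm
    rw [this, show phiL [] = [] from by simp [phiL, rle], occ1000_nil, occ1110_nil]
  · have hwf := rle_wf l
    rw [hl] at hwf
    obtain ⟨ha, hR⟩ := hwf
    rw [show phiL l = unrle (go a v R) from by rw [phiL, hl]]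
    have := main R v a a ha ha hR
    have h2 := img_cancel this
    rw [← h2]
    conv_lhs => rw [← unrle_rle l, hl]

lemma phiL_valid (l : List ℕ) (h : ∀ i, evL l i ≤ i) : ∀ p, evL (phiL l) p ≤ p := by
  rcases hl : rle l with _ | ⟨⟨v, a⟩, R⟩
  · intro p
    rw [show phiL l = [] from by rw [phiL, hl]]
    simp [evL]
  · have hwf := rle_wf l
    rw [hl] at hwf
    obtain ⟨ha, hR⟩ := hwf
    rw [show phiL l = unrle (go a v R) from by rw [phiL, hl]]
    have hl' : l = unrle ((v,a)::R) := by
      conv_lhs => rw [← unrle_rle l, hl]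
    have hv0 : v ≤ 0 := by
      have := h 0
      rw [hl', evL_unrle_zero v a R ha] at this
      exact this
    have hrv : runValid 0 ((v,a)::R) := by
      refine runValid_of_evL ((v,a)::R) 0 ⟨ha, hR⟩ ?_
      intro i _
      rw [← hl']
      simpa using h i
    intro p
    have := go_valid R v a a 0 0 ha hv0 (by omega) hR (by simpa using hrv.2) p
    simpa using this

lemma phiL_inj : ∀ l1 l2 : List ℕ, phiL l1 = phiL l2 → l1 = l2 := by
  intro l1 l2 h
  rcases h1 : rle l1 with _ | ⟨⟨v, a⟩, R⟩ <;> rcases h2 : rle l2 with _ | ⟨⟨v', a'⟩, R'⟩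
  · rw [← unrle_rle l1, ← unrle_rle l2, h1, h2]
  · exfalso
    have hwf := rle_wf l2
    rw [h2] at hwf
    obtain ⟨ha', hR'⟩ := hwf
    rw [show phiL l1 = [] from by rw [phiL, h1],
      show phiL l2 = unrle (go a' v' R') from by rw [phiL, h2]] at h
    obtain ⟨c, G, hG, hc⟩ := go_head a' v' R' ha' hR'
    rw [hG, unrle_cons] at h
    have := congrArg List.length h
    simp at this
    omega
  · exfalso
    have hwf := rle_wf l1
    rw [h1] at hwf
    obtain ⟨ha, hR⟩ := hwf
    rw [show phiL l1 = unrle (go a v R) from by rw [phiL, h1],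
      show phiL l2 = [] from by rw [phiL, h2]] at h
    obtain ⟨c, G, hG, hc⟩ := go_head a v R ha hR
    rw [hG, unrle_cons] at h
    have := congrArg List.length h
    simp at this
    omega
  · have hwf1 := rle_wf l1
    rw [h1] at hwf1
    obtain ⟨ha, hR⟩ := hwf1
    have hwf2 := rle_wf l2
    rw [h2] at hwf2
    obtain ⟨ha', hR'⟩ := hwf2
    rw [show phiL l1 = unrle (go a v R) from by rw [phiL, h1],
      show phiL l2 = unrle (go a' v' R') from by rw [phiL, h2]] at h
    have hg : go a v R = go a' v' R' := by
      have e1 := rle_unrle (go a v R) (go_wf R v a ha hR)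
      have e2 := rle_unrle (go a' v' R') (go_wf R' v' a' ha' hR')
      rw [← e1, ← e2, h]
    have hvv : v = v' := by
      obtain ⟨c, G, hG, _⟩ := go_head a v R ha hR
      obtain ⟨c', G', hG', _⟩ := go_head a' v' R' ha' hR'
      have hg2 := hg
      rw [hG, hG'] at hg2
      simp at hg2
      exact hg2.1.1
    subst hvv
    obtain ⟨haa, hRR⟩ := go_inj R R' v a a' ha ha' hR hR' hg
    rw [← unrle_rle l1, ← unrle_rle l2, h1, h2, haa, hRR]

def toL {n : ℕ} (e : InvSeq n) : List ℕ := List.ofFn fun i => (e i : ℕ)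

lemma toL_length {n : ℕ} (e : InvSeq n) : (toL e).length = n := by simp [toL]

lemma evL_toL {n : ℕ} (e : InvSeq n) (i : ℕ) : evL (toL e) i = ev e i := by
  unfold evL ev toL
  by_cases h : i < n
  · rw [dif_pos h, List.getD_eq_getElem _ _ (by simpa using h)]
    simp
  · rw [dif_neg h, List.getD_eq_default _ _ (by simpa using h)]

lemma Em1000_occ {n : ℕ} (e : InvSeq n) : Em1000 e = occ1000 (toL e) := by
  ext i
  simp [Em1000, occ1000, evL_toL, toL_length]

lemma Em1110_occ {n : ℕ} (e : InvSeq n) : Em1110 e = occ1110 (toL e) := by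
  ext i
  simp [Em1110, occ1110, evL_toL, toL_length]

lemma toL_valid {n : ℕ} (e : InvSeq n) : ∀ j, evL (toL e) j ≤ j := by
  intro j
  rw [evL_toL]
  unfold ev
  split
  · exact Nat.lt_succ_iff.mp (Fin.is_lt _)
  · exact Nat.zero_le _

def Phi {n : ℕ} (e : InvSeq n) : InvSeq n := fun i =>
  ⟨evL (phiL (toL e)) i.val, by
    have := phiL_valid (toL e) (toL_valid e) i.val
    omega⟩

lemma toL_Phi {n : ℕ} (e : InvSeq n) : toL (Phi e) = phiL (toL e) := by
  apply List.ext_getElem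
  · rw [toL_length, phiL_length, toL_length]
  · intro i h1 h2
    have : (toL (Phi e))[i] = evL (phiL (toL e)) i := by
      simp [toL, Phi]
    rw [this]
    unfold evL
    rw [List.getD_eq_getElem _ _ h2]

lemma Em_Phi {n : ℕ} (e : InvSeq n) : Em1000 e = Em1110 (Phi e) := by
  rw [Em1000_occ, Em1110_occ, toL_Phi, phiL_occ]

lemma Phi_inj {n : ℕ} : Function.Injective (Phi (n := n)) := by
  intro e1 e2 h
  have h2 : phiL (toL e1) = phiL (toL e2) := by rw [← toL_Phi, ← toL_Phi, h]
  have h3 := phiL_inj _ _ h2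
  funext i
  have h4 := congrArg (fun l => evL l i.val) h3
  simp only [evL_toL] at h4
  unfold ev at h4
  rw [dif_pos i.isLt, dif_pos i.isLt] at h4
  apply Fin.ext
  simpa using h4

end SSW

/-- Super strong Wilf equivalence of 1000 and 1110. -/
theorem superStrongWilf_1000_1110 (n : ℕ) (T : Set ℕ) :
    Nat.card {e : InvSeq n // Em1000 e = T} = Nat.card {e : InvSeq n // Em1110 e = T} := by
  have hbij : Function.Bijective (SSW.Phi (n := n)) :=
    (Finite.injective_iff_bijective).1 SSW.Phi_inj
  apply Nat.card_congr
  exact Equiv.subtypeEquiv (Equiv.ofBijective _ hbij) (fun e => by rw [SSW.Em_Phi e]; rfl)
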